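/- Suppose u is of class C⁴ on the open set D and satisfies the elastic oscillation equation μ·Δu + (λ+μ)·grad(div u) + Λ·u = 0 at every point of D. Then u satisfies the factored fourth-order equation (Δ + ω₁)(Δ + ω₂)u = 0 on D; explicitly, Δ(Δu) + (ω₁ + ω₂)·Δu + ω₁ω₂·u = 0 at every point of D, where ω₁ = Λ/(λ+2μ) and ω₂ = Λ/μ. -/

import Mathlib

noncomputable section

/-- Partial derivative of a scalar function on `ℝ³` in the `i`-th coordinate direction. -/
def pd (i : Fin 3) (f : (Fin 3 → ℝ) → ℝ) : (Fin 3 → ℝ) → ℝ :=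
  fun x => fderiv ℝ f x (Pi.single i 1)

/-- Scalar Laplacian on `ℝ³`. -/
def lap (f : (Fin 3 → ℝ) → ℝ) : (Fin 3 → ℝ) → ℝ :=
  fun x => ∑ i : Fin 3, pd i (pd i f) x

/-- Componentwise (vector) Laplacian on `ℝ³`. -/
def vlap (v : (Fin 3 → ℝ) → (Fin 3 → ℝ)) : (Fin 3 → ℝ) → (Fin 3 → ℝ) :=
  fun x j => lap (fun y => v y j) x

/-- Divergence of a vector field on `ℝ³`. -/
def divg (v : (Fin 3 → ℝ) → (Fin 3 → ℝ)) : (Fin 3 → ℝ) → ℝ :=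
  fun x => ∑ i : Fin 3, pd i (fun y => v y i) x

/-- Gradient of a scalar function on `ℝ³`. -/
def grad (f : (Fin 3 → ℝ) → ℝ) : (Fin 3 → ℝ) → (Fin 3 → ℝ) :=
  fun x i => pd i f x

section Helpers

variable {D : Set (Fin 3 → ℝ)} {x : Fin 3 → ℝ}

lemma pd_congr {f g : (Fin 3 → ℝ) → ℝ} (hD : IsOpen D) (h : Set.EqOn f g D)
    (hx : x ∈ D) (i : Fin 3) : pd i f x = pd i g x := by
  unfold pd
  rw [Filter.EventuallyEq.fderiv_eq (Filter.eventuallyEq_of_mem (hD.mem_nhds hx) h)]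

lemma pd_zero (i : Fin 3) (x : Fin 3 → ℝ) : pd i (fun _ => (0:ℝ)) x = 0 := by
  simp [pd]

lemma lap_zero (x : Fin 3 → ℝ) : lap (fun _ => (0:ℝ)) x = 0 := by
  have h : ∀ i : Fin 3, pd i (fun _ => (0:ℝ)) = fun _ => 0 := fun i => funext fun y => pd_zero i y
  simp [lap, h, pd_zero]

lemma pd_contDiffOn {m n : WithTop ℕ∞} {f : (Fin 3 → ℝ) → ℝ} (hD : IsOpen D)
    (hf : ContDiffOn ℝ n f D) (h : m + 1 ≤ n) (i : Fin 3) :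
    ContDiffOn ℝ m (pd i f) D :=
  (hf.fderiv_of_isOpen hD h).clm_apply contDiffOn_const

lemma diffAt {n : WithTop ℕ∞} {f : (Fin 3 → ℝ) → ℝ} (hD : IsOpen D)
    (hf : ContDiffOn ℝ n f D) (h : 1 ≤ n) (hx : x ∈ D) : DifferentiableAt ℝ f x :=
  (hf.contDiffAt (hD.mem_nhds hx)).differentiableAt (lt_of_lt_of_le zero_lt_one h).ne'

lemma lap_contDiffOn {m : WithTop ℕ∞} {f : (Fin 3 → ℝ) → ℝ} (hD : IsOpen D)
    (hf : ContDiffOn ℝ (m + 1 + 1) f D) : ContDiffOn ℝ m (lap f) D :=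
  ContDiffOn.sum fun i _ => pd_contDiffOn hD (pd_contDiffOn hD hf le_rfl i) le_rfl i

lemma pd_add {f g : (Fin 3 → ℝ) → ℝ} (hf : DifferentiableAt ℝ f x)
    (hg : DifferentiableAt ℝ g x) (i : Fin 3) :
    pd i (fun y => f y + g y) x = pd i f x + pd i g x := by
  unfold pd
  rw [fderiv_fun_add hf hg]
  rfl

lemma pd_const_mul {f : (Fin 3 → ℝ) → ℝ} (hf : DifferentiableAt ℝ f x) (c : ℝ) (i : Fin 3) :
    pd i (fun y => c * f y) x = c * pd i f x := by
  unfold pd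
  rw [fderiv_const_mul hf]
  rfl

lemma pd_sum (A : Fin 3 → (Fin 3 → ℝ) → ℝ) (h : ∀ k, DifferentiableAt ℝ (A k) x) (i : Fin 3) :
    pd i (fun y => ∑ k : Fin 3, A k y) x = ∑ k : Fin 3, pd i (A k) x := by
  unfold pd
  rw [fderiv_fun_sum (fun k _ => h k)]
  simp

lemma pd_lin2 {f g : (Fin 3 → ℝ) → ℝ} (hf : DifferentiableAt ℝ f x)
    (hg : DifferentiableAt ℝ g x) (a b : ℝ) (i : Fin 3) :
    pd i (fun y => a * f y + b * g y) x = a * pd i f x + b * pd i g x := by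
  rw [pd_add (hf.const_mul a) (hg.const_mul b), pd_const_mul hf, pd_const_mul hg]

lemma pd_lin3 {f g h : (Fin 3 → ℝ) → ℝ} (hf : DifferentiableAt ℝ f x)
    (hg : DifferentiableAt ℝ g x) (hh : DifferentiableAt ℝ h x) (a b c : ℝ) (i : Fin 3) :
    pd i (fun y => a * f y + b * g y + c * h y) x
      = a * pd i f x + b * pd i g x + c * pd i h x := by
  rw [pd_add (f := fun y => a * f y + b * g y) ((hf.const_mul a).add (hg.const_mul b)) (hh.const_mul c),
    pd_lin2 hf hg, pd_const_mul hh]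

lemma pd_eq_snd {f : (Fin 3 → ℝ) → ℝ} (hf : DifferentiableAt ℝ (fderiv ℝ f) x) (i j : Fin 3) :
    pd i (pd j f) x = fderiv ℝ (fderiv ℝ f) x (Pi.single i 1) (Pi.single j 1) := by
  unfold pd
  rw [fderiv_clm_apply hf (differentiableAt_const _)]
  simp

lemma pd_comm {f : (Fin 3 → ℝ) → ℝ} (hD : IsOpen D) (hf : ContDiffOn ℝ 2 f D)
    (hx : x ∈ D) (i j : Fin 3) : pd i (pd j f) x = pd j (pd i f) x := by
  have hat : ContDiffAt ℝ 2 f x := hf.contDiffAt (hD.mem_nhds hx)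
  have hdf : DifferentiableAt ℝ (fderiv ℝ f) x :=
    (hat.fderiv_right (m := 1) (by norm_num)).differentiableAt (by norm_num)
  rw [pd_eq_snd hdf, pd_eq_snd hdf]
  exact (hat.isSymmSndFDerivAt (by simp [minSmoothness_of_isRCLikeNormedField])) _ _

lemma lap_eqOn {f g : (Fin 3 → ℝ) → ℝ} (hD : IsOpen D) (h : Set.EqOn f g D) :
    Set.EqOn (lap f) (lap g) D := fun y hy => by
  unfold lap
  exact Finset.sum_congr rfl fun i _ =>
    pd_congr hD (fun z hz => pd_congr hD h hz i) hy i

lemma lap_lin3 {f g h : (Fin 3 → ℝ) → ℝ} (hD : IsOpen D)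
    (hf : ContDiffOn ℝ 2 f D) (hg : ContDiffOn ℝ 2 g D) (hh : ContDiffOn ℝ 2 h D)
    (hx : x ∈ D) (a b c : ℝ) :
    lap (fun y => a * f y + b * g y + c * h y) x = a * lap f x + b * lap g x + c * lap h x := by
  have key : ∀ i : Fin 3, pd i (pd i (fun y => a * f y + b * g y + c * h y)) x
      = a * pd i (pd i f) x + b * pd i (pd i g) x + c * pd i (pd i h) x := by
    intro i
    have hEq : Set.EqOn (pd i (fun y => a * f y + b * g y + c * h y))
        (fun y => a * pd i f y + b * pd i g y + c * pd i h y) D := fun z hz =>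
      pd_lin3 (diffAt hD hf one_le_two hz) (diffAt hD hg one_le_two hz)
        (diffAt hD hh one_le_two hz) a b c i
    rw [pd_congr hD hEq hx i,
      pd_lin3 (diffAt hD (pd_contDiffOn hD hf (by norm_num) i) le_rfl hx)
        (diffAt hD (pd_contDiffOn hD hg (by norm_num) i) le_rfl hx)
        (diffAt hD (pd_contDiffOn hD hh (by norm_num) i) le_rfl hx)]
  unfold lap
  rw [Finset.sum_congr rfl fun i _ => key i, Finset.sum_add_distrib, Finset.sum_add_distrib,
    ← Finset.mul_sum, ← Finset.mul_sum, ← Finset.mul_sum]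

lemma lap_sum (hD : IsOpen D) (A : Fin 3 → (Fin 3 → ℝ) → ℝ)
    (hA : ∀ k, ContDiffOn ℝ 2 (A k) D) (hx : x ∈ D) :
    lap (fun y => ∑ k : Fin 3, A k y) x = ∑ k : Fin 3, lap (A k) x := by
  have key : ∀ i : Fin 3, pd i (pd i (fun y => ∑ k : Fin 3, A k y)) x
      = ∑ k : Fin 3, pd i (pd i (A k)) x := by
    intro i
    have hEq : Set.EqOn (pd i (fun y => ∑ k : Fin 3, A k y))
        (fun y => ∑ k : Fin 3, pd i (A k) y) D := fun z hz =>
      pd_sum A (fun k => diffAt hD (hA k) one_le_two hz) i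
    rw [pd_congr hD hEq hx i,
      pd_sum _ (fun k => diffAt hD (pd_contDiffOn hD (hA k) (by norm_num) i) le_rfl hx) i]
  unfold lap
  rw [Finset.sum_congr rfl fun i _ => key i, Finset.sum_comm]

lemma pd_lap_comm {f : (Fin 3 → ℝ) → ℝ} (hD : IsOpen D) (hf : ContDiffOn ℝ 3 f D)
    (hx : x ∈ D) (j : Fin 3) : lap (pd j f) x = pd j (lap f) x := by
  have h2 : ContDiffOn ℝ 2 f D := hf.of_le (by norm_num)
  have hpdi : ∀ i : Fin 3, ContDiffOn ℝ 2 (pd i f) D := fun i =>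
    pd_contDiffOn hD hf (by norm_num) i
  have step : ∀ i : Fin 3, pd i (pd i (pd j f)) x = pd j (pd i (pd i f)) x := by
    intro i
    have e1 : pd i (pd i (pd j f)) x = pd i (pd j (pd i f)) x :=
      pd_congr hD (fun z hz => pd_comm hD h2 hz i j) hx i
    rw [e1, pd_comm hD (hpdi i) hx i j]
  have e2 : lap f = fun y => ∑ i : Fin 3, pd i (pd i f) y := rfl
  have e3 : pd j (lap f) x = ∑ i : Fin 3, pd j (pd i (pd i f)) x := by
    rw [e2]
    exact pd_sum _ (fun k => diffAt hD
      (pd_contDiffOn hD (hpdi k) le_rfl k) le_rfl hx) j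
  rw [e3]
  unfold lap
  exact Finset.sum_congr rfl fun i _ => step i

end Helpers

/-- If a `C⁴` vector field `u` satisfies the elastic oscillation equation
`μ Δu + (λ+μ) grad (div u) + Λ u = 0` on an open set `D`, then `u` satisfies the factored
fourth-order equation `(Δ + ω₁)(Δ + ω₂)u = 0`, i.e.
`Δ(Δu) + (ω₁+ω₂) Δu + ω₁ω₂ u = 0` on `D`, where `ω₁ = Λ/(λ+2μ)` and `ω₂ = Λ/μ`. -/
theorem factored_fourth_order_equation
    (μ lam Λ : ℝ) (hμ : 0 < μ) (hlam : 0 < lam + 2 * μ)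
    (D : Set (Fin 3 → ℝ)) (hD : IsOpen D)
    (u : (Fin 3 → ℝ) → (Fin 3 → ℝ)) (hu : ContDiffOn ℝ 4 u D)
    (heq : ∀ x ∈ D, ∀ j : Fin 3,
      μ * vlap u x j + (lam + μ) * grad (divg u) x j + Λ * u x j = 0) :
    ∀ x ∈ D, ∀ j : Fin 3,
      vlap (vlap u) x j + (Λ / (lam + 2 * μ) + Λ / μ) * vlap u x j
        + (Λ / (lam + 2 * μ)) * (Λ / μ) * u x j = 0 := by
  have hμ0 : μ ≠ 0 := ne_of_gt hμ
  have hl0 : lam + 2 * μ ≠ 0 := ne_of_gt hlam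
  set d : (Fin 3 → ℝ) → ℝ := divg u with hd
  have hcomp : ∀ j : Fin 3, ContDiffOn ℝ 4 (fun y => u y j) D := fun j =>
    (ContinuousLinearMap.proj (R := ℝ) (φ := fun _ : Fin 3 => ℝ) j).contDiff.comp_contDiffOn hu
  have hpd4 : ∀ i j : Fin 3, ContDiffOn ℝ 3 (pd i (fun y => u y j)) D := fun i j =>
    pd_contDiffOn hD (hcomp j) (by norm_num) i
  have hd3 : ContDiffOn ℝ 3 d D := by
    rw [hd]
    show ContDiffOn ℝ 3 (fun y => ∑ i : Fin 3, pd i (fun z => u z i) y) D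
    exact ContDiffOn.sum fun i _ => hpd4 i i
  have hlapuj2 : ∀ j : Fin 3, ContDiffOn ℝ 2 (lap (fun y => u y j)) D := fun j =>
    lap_contDiffOn hD ((hcomp j).of_le (by norm_num))
  have hpdjd2 : ∀ j : Fin 3, ContDiffOn ℝ 2 (pd j d) D := fun j =>
    pd_contDiffOn hD hd3 (by norm_num) j
  have hlapd1 : ContDiffOn ℝ 1 (lap d) D := lap_contDiffOn hD (hd3.of_le (by norm_num))
  -- the elastic oscillation equation as an EqOn statement (componentwise)
  have hF : ∀ j : Fin 3, Set.EqOn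
      (fun y => μ * lap (fun z => u z j) y + (lam + μ) * pd j d y + Λ * u y j)
      (fun _ => (0:ℝ)) D := fun j y hy => heq y hy j
  -- Step 1: divergence of the equation: (λ+2μ) Δ(div u) + Λ div u = 0 on D
  have K1 : ∀ x' ∈ D, (lam + 2*μ) * lap d x' + Λ * d x' = 0 := by
    intro x' hx'
    have hexp : ∀ j : Fin 3, μ * pd j (lap (fun z => u z j)) x'
        + (lam + μ) * pd j (pd j d) x' + Λ * pd j (fun y => u y j) x' = 0 := by
      intro j
      rw [← pd_lin3 (diffAt hD (hlapuj2 j) one_le_two hx')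
        (diffAt hD (hpdjd2 j) one_le_two hx')
        (diffAt hD (hcomp j) (by norm_num) hx') μ (lam+μ) Λ j]
      rw [pd_congr hD (hF j) hx' j, pd_zero]
    have hA : ∑ j : Fin 3, pd j (lap (fun z => u z j)) x' = lap d x' := by
      have h1 : ∀ j : Fin 3, pd j (lap (fun z => u z j)) x'
          = lap (pd j (fun z => u z j)) x' :=
        fun j => (pd_lap_comm hD ((hcomp j).of_le (by norm_num)) hx' j).symm
      rw [Finset.sum_congr rfl fun j _ => h1 j]
      have h2 : lap d x' = ∑ j : Fin 3, lap (pd j (fun z => u z j)) x' := by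
        rw [hd]
        show lap (fun y => ∑ i : Fin 3, pd i (fun z => u z i) y) x' = _
        exact lap_sum hD _ (fun k => (hpd4 k k).of_le (by norm_num)) hx'
      exact h2.symm
    have hs : ∑ j : Fin 3, (μ * pd j (lap (fun z => u z j)) x'
        + (lam + μ) * pd j (pd j d) x' + Λ * pd j (fun y => u y j) x') = 0 :=
      Finset.sum_eq_zero fun j _ => hexp j
    rw [Finset.sum_add_distrib, Finset.sum_add_distrib, ← Finset.mul_sum, ← Finset.mul_sum,
      ← Finset.mul_sum, hA] at hs
    have e1 : ∑ j : Fin 3, pd j (pd j d) x' = lap d x' := rfl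
    have e2 : ∑ j : Fin 3, pd j (fun y => u y j) x' = d x' := rfl
    rw [e1, e2] at hs
    linarith
  -- Step 2: gradient of K1
  have K2 : ∀ x' ∈ D, ∀ i : Fin 3,
      (lam + 2*μ) * pd i (lap d) x' + Λ * pd i d x' = 0 := by
    intro x' hx' i
    have hEq : Set.EqOn (fun y => (lam + 2*μ) * lap d y + Λ * d y) (fun _ => (0:ℝ)) D :=
      fun y hy => K1 y hy
    have h0 : pd i (fun y => (lam + 2*μ) * lap d y + Λ * d y) x' = 0 := by
      rw [pd_congr hD hEq hx' i, pd_zero]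
    rw [pd_lin2 (diffAt hD hlapd1 le_rfl hx')
      (diffAt hD hd3 (by norm_num) hx') (lam + 2*μ) Λ i] at h0
    exact h0
  -- Step 3: apply the Laplacian to the equation at x
  intro x hx j
  have hlap0 : lap (fun y => μ * lap (fun z => u z j) y
      + (lam + μ) * pd j d y + Λ * u y j) x = 0 := by
    rw [(lap_eqOn hD (hF j)) hx]
    exact lap_zero x
  rw [lap_lin3 hD (hlapuj2 j) (hpdjd2 j) ((hcomp j).of_le (by norm_num)) hx μ (lam+μ) Λ]
    at hlap0
  rw [pd_lap_comm hD hd3 hx j] at hlap0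
  -- hlap0 : μ * lap (lap uj) x + (lam+μ) * pd j (lap d) x + Λ * lap uj x = 0
  have h4 := K2 x hx j
  have h1 : μ * lap (fun z => u z j) x + (lam + μ) * pd j d x + Λ * u x j = 0 := heq x hx j
  have gA : vlap (vlap u) x j = lap (lap (fun z => u z j)) x := rfl
  have gB : vlap u x j = lap (fun z => u z j) x := rfl
  rw [gA, gB]
  have key : μ * (lam + 2*μ) * lap (lap (fun z => u z j)) x
      + (Λ * μ + Λ * (lam + 2*μ)) * lap (fun z => u z j) x + Λ * Λ * u x j = 0 := by
    linear_combination (lam + 2*μ) * hlap0 - (lam + μ) * h4 + Λ * h1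
  field_simp
  linear_combination key

end
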